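/- For an open proper convex cone C ⊂ ℝ^{n+1} with base-point b ∈ C and z ∈ C, the Legendre–Fenchel conjugate of j_{C,z}(x) := M(x/z;C)/M(b/z;C) is the characteristic function (0 on the set, +∞ off it) of Z_{C,z} := C* ∩ {u : M(b/z;C)·⟨u,z⟩ ≤ 1}. -/

import Mathlib

open scoped RealInnerProductSpace Classical

/-- For an open proper convex cone `C ⊂ ℝ^{n+1}` with
base-point `b ∈ C` and `z ∈ C`, the Legendre–Fenchel conjugate of
`j_{C,z}(x) := M(x/z;C)/M(b/z;C)` is the characteristic function (0 on the set,
`+∞` off it) of `Z_{C,z} := C* ∩ {u : M(b/z;C)·⟨u,z⟩ ≤ 1}`. -/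
theorem conjugate_of_gauge_ratio {n : ℕ}
    (C : Set (EuclideanSpace ℝ (Fin (n + 1))))
    (hopen : IsOpen C) (hconv : Convex ℝ C) (hne : C.Nonempty)
    (hcone : ∀ (c : ℝ), 0 < c → ∀ x ∈ C, c • x ∈ C)
    (hproper : ∀ v ∈ closure C, -v ∈ closure C → v = 0)
    (b z : EuclideanSpace ℝ (Fin (n + 1))) (hb : b ∈ C) (hz : z ∈ C)
    (M : EuclideanSpace ℝ (Fin (n + 1)) → EuclideanSpace ℝ (Fin (n + 1)) → ℝ)
    (hM : ∀ x y, M x y = sInf {l : ℝ | 0 < l ∧ l • y - x ∈ closure C}) :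
    ∀ u : EuclideanSpace ℝ (Fin (n + 1)),
      (⨆ x : EuclideanSpace ℝ (Fin (n + 1)),
          ((⟪u, x⟫ - M x z / M b z : ℝ) : EReal))
        = if (∀ w ∈ C, 0 ≤ ⟪u, w⟫) ∧ M b z * ⟪u, z⟫ ≤ 1 then 0 else ⊤ := by
  classical
  -- closure of C is stable under positive scaling
  have hclCone : ∀ (c : ℝ), 0 < c → ∀ x ∈ closure C, c • x ∈ closure C := by
    intro c hc x hx
    have h1 : (c • ·) '' closure C ⊆ closure ((c • ·) '' C) :=
      image_closure_subset_closure_image (continuous_const_smul c)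
    have h2 : (c • ·) '' C ⊆ C := by
      rintro - ⟨y, hy, rfl⟩; exact hcone c hc y hy
    have := h1 ⟨x, hx, rfl⟩
    exact closure_mono h2 this
  -- C is closed under addition
  have hCadd : ∀ a ∈ C, ∀ a' ∈ C, a + a' ∈ C := by
    intro a ha a' ha'
    have hmid : (1/2 : ℝ) • a + (1/2 : ℝ) • a' ∈ C :=
      hconv ha ha' (by norm_num) (by norm_num) (by norm_num)
    have := hcone 2 (by norm_num) _ hmid
    have heq : (2:ℝ) • ((1/2 : ℝ) • a + (1/2 : ℝ) • a') = a + a' := by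
      rw [smul_add, smul_smul, smul_smul]; norm_num
    rwa [heq] at this
  -- closure of C is closed under addition
  have hclAdd : ∀ a ∈ closure C, ∀ a' ∈ closure C, a + a' ∈ closure C := by
    intro a ha a' ha'
    have hconvcl : Convex ℝ (closure C) := hconv.closure
    have hmid : (1/2 : ℝ) • a + (1/2 : ℝ) • a' ∈ closure C :=
      hconvcl ha ha' (by norm_num) (by norm_num) (by norm_num)
    have := hclCone 2 (by norm_num) _ hmid
    have heq : (2:ℝ) • ((1/2 : ℝ) • a + (1/2 : ℝ) • a') = a + a' := by
      rw [smul_add, smul_smul, smul_smul]; norm_num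
    rwa [heq] at this
  -- 0 belongs to the closure of C
  have h0cl : (0 : EuclideanSpace ℝ (Fin (n + 1))) ∈ closure C := by
    obtain ⟨c0, hc0⟩ := hne
    have htd : Filter.Tendsto (fun k : ℕ => (1 / ((k:ℝ) + 1)) • c0)
        Filter.atTop (nhds 0) := by
      have := (tendsto_one_div_add_atTop_nhds_zero_nat : Filter.Tendsto (fun k : ℕ => 1 / ((k:ℝ) + 1)) Filter.atTop (nhds 0)).smul_const c0
      simpa using this
    refine mem_closure_of_tendsto htd ?_
    filter_upwards with k
    exact hcone _ (by positivity) _ hc0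
  -- 0 is not in C
  have h0notC : (0 : EuclideanSpace ℝ (Fin (n + 1))) ∉ C := by
    intro h0
    rw [Metric.isOpen_iff] at hopen
    obtain ⟨ε, hε, hball⟩ := hopen 0 h0
    set v : EuclideanSpace ℝ (Fin (n + 1)) := (ε/2) • EuclideanSpace.single (0 : Fin (n+1)) (1:ℝ) with hv
    have hnv : ‖v‖ = ε/2 := by
      rw [hv, norm_smul, EuclideanSpace.norm_single]
      simp [Real.norm_eq_abs, abs_div, abs_of_pos hε]
    have hvC : v ∈ C := by
      apply hball; simp [mem_ball_iff_norm, hnv]; linarith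
    have hvC' : -v ∈ C := by
      apply hball; simp [mem_ball_iff_norm, hnv]; linarith
    have := hproper v (subset_closure hvC) (subset_closure hvC')
    rw [this] at hnv; simp at hnv; linarith
  have hzne : z ≠ 0 := fun h => h0notC (h ▸ hz)
  -- the sets S x
  set S : EuclideanSpace ℝ (Fin (n + 1)) → Set ℝ := fun x => {l : ℝ | 0 < l ∧ l • z - x ∈ closure C} with hS
  have hMS : ∀ x, M x z = sInf (S x) := fun x => hM x z
  -- S x is nonempty
  have hSne : ∀ x : EuclideanSpace ℝ (Fin (n + 1)), (S x).Nonempty := by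
    intro x
    have hcont : Filter.Tendsto (fun t : ℝ => z - t • x) (nhds 0) (nhds z) := by
      have : Filter.Tendsto (fun t : ℝ => z - t • x) (nhds 0) (nhds (z - (0:ℝ) • x)) := by
        exact (tendsto_const_nhds.sub ((continuous_id.smul continuous_const).tendsto 0))
      simpa using this
    have hev : ∀ᶠ t in nhds (0:ℝ), z - t • x ∈ C := hcont.eventually_mem (hopen.mem_nhds hz)
    have hev' : ∀ᶠ t in nhdsWithin (0:ℝ) (Set.Ioi 0), z - t • x ∈ C ∧ t ∈ Set.Ioi (0:ℝ) :=
      (eventually_nhdsWithin_of_eventually_nhds hev).and eventually_mem_nhdsWithin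
    obtain ⟨t, htC, ht⟩ := hev'.exists
    have ht0 : (0:ℝ) < t := ht
    refine ⟨t⁻¹, by positivity, ?_⟩
    have : t⁻¹ • (z - t • x) ∈ C := hcone _ (by positivity) _ htC
    have heq : t⁻¹ • (z - t • x) = t⁻¹ • z - x := by
      rw [smul_sub, smul_smul, inv_mul_cancel₀ (ne_of_gt ht0), one_smul]
    rw [heq] at this
    exact subset_closure this
  have hSbdd : ∀ x : EuclideanSpace ℝ (Fin (n + 1)), BddBelow (S x) := fun x => ⟨0, fun l hl => hl.1.le⟩
  have hMnonneg : ∀ x : EuclideanSpace ℝ (Fin (n + 1)), 0 ≤ M x z := by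
    intro x; rw [hMS]; exact le_csInf (hSne x) (fun l hl => hl.1.le)
  -- M 0 z = 0
  have hM0 : M 0 z = 0 := by
    rw [hMS]
    have : S 0 = Set.Ioi 0 := by
      ext l
      constructor
      · exact fun hl => hl.1
      · intro hl
        exact ⟨hl, by simpa using subset_closure (hcone l hl z hz)⟩
    rw [this, csInf_Ioi]
  -- M b z > 0
  have hmpos : 0 < M b z := by
    rcases lt_or_eq_of_le (hMnonneg b) with h | h
    · exact h
    have hnb : -b ∈ closure C := by
      have : -b ∈ closure (closure C) := by
        rw [Metric.mem_closure_iff]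
        intro ε hε
        have hδ : (0:ℝ) < ε / (‖z‖ + 1) := by positivity
        have hlt : sInf (S b) < ε / (‖z‖ + 1) := by rw [← hMS, ← h]; exact hδ
        obtain ⟨l, hl, hlδ⟩ := exists_lt_of_csInf_lt (hSne b) hlt
        refine ⟨l • z - b, hl.2, ?_⟩
        have : dist (-b) (l • z - b) = ‖l • z‖ := by
          rw [dist_eq_norm]
          have h' : -b - (l • z - b) = -(l • z) := by abel
          rw [h', norm_neg]
        rw [this, norm_smul, Real.norm_eq_abs, abs_of_pos hl.1]
        calc l * ‖z‖ ≤ l * (‖z‖ + 1) := by nlinarith [hl.1, norm_nonneg z]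
          _ < (ε / (‖z‖ + 1)) * (‖z‖ + 1) := by
              apply mul_lt_mul_of_pos_right hlδ; positivity
          _ = ε := by field_simp
      rwa [closure_closure] at this
    have hb0 := hproper b (subset_closure hb) hnb
    exact absurd (hb0 ▸ hb) h0notC
  -- M (t • z) z = t for t > 0
  have hMtz : ∀ t : ℝ, 0 < t → M (t • z) z = t := by
    intro t ht
    rw [hMS]
    have hSt : S (t • z) = Set.Ici t := by
      ext l
      constructor
      · rintro ⟨hl, hcl⟩
        by_contra hlt
        simp only [Set.mem_Ici, not_le] at hlt
        have h1 : (t - l) • z ∈ closure C :=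
          subset_closure (hcone _ (by linarith) _ hz)
        have h2 : -((t - l) • z) ∈ closure C := by
          have : l • z - t • z = -((t - l) • z) := by
            rw [← sub_smul, ← neg_smul]; ring_nf
          rwa [this] at hcl
        have := hproper _ h1 h2
        rcases smul_eq_zero.mp this with h | h
        · exact absurd h (by intro hh; linarith [sub_eq_zero.mp hh])
        · exact hzne h
      · intro hl
        have hl' : t ≤ l := hl
        refine ⟨lt_of_lt_of_le ht hl', ?_⟩
        have : l • z - t • z = (l - t) • z := by rw [sub_smul]
        rw [this]
        rcases eq_or_lt_of_le hl' with h | h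
        · rw [← h]; simpa using h0cl
        · exact subset_closure (hcone _ (by linarith) _ hz)
    rw [hSt, csInf_Ici]
  -- M (-(t • w)) z = 0 for w ∈ C, t > 0
  have hMneg : ∀ w ∈ C, ∀ t : ℝ, 0 < t → M (-(t • w)) z = 0 := by
    intro w hw t ht
    rw [hMS]
    have hSt : S (-(t • w)) = Set.Ioi 0 := by
      ext l
      constructor
      · exact fun hl => hl.1
      · intro hl
        refine ⟨hl, ?_⟩
        have : l • z - -(t • w) = l • z + t • w := by abel
        rw [this]
        exact subset_closure (hCadd _ (hcone l hl z hz) _ (hcone t ht w hw))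
    rw [hSt, csInf_Ioi]
  -- key inequality for dual vectors
  intro u
  have hkey : (∀ w ∈ C, 0 ≤ ⟪u, w⟫) → ∀ x : EuclideanSpace ℝ (Fin (n + 1)), ⟪u, x⟫ ≤ M x z * ⟪u, z⟫ := by
    intro hA x
    have hAcl : ∀ w ∈ closure C, 0 ≤ ⟪u, w⟫ := by
      intro w hw
      have hclosed : IsClosed {w : EuclideanSpace ℝ (Fin (n + 1)) | 0 ≤ ⟪u, w⟫} :=
        isClosed_le continuous_const (continuous_const.inner continuous_id)
      exact closure_minimal (fun y hy => hA y hy) hclosed hw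
    have hl : ∀ l ∈ S x, ⟪u, x⟫ ≤ l * ⟪u, z⟫ := by
      intro l hl
      have := hAcl _ hl.2
      rw [inner_sub_right, inner_smul_right] at this
      linarith
    have hcz : 0 ≤ ⟪u, z⟫ := hA z hz
    rcases eq_or_lt_of_le hcz with h | h
    · obtain ⟨l, hlS⟩ := hSne x
      have := hl l hlS
      rw [← h] at this ⊢
      simpa using this
    · rw [← div_le_iff₀ h]
      rw [hMS]
      apply le_csInf (hSne x)
      intro l hlS
      rw [div_le_iff₀ h]
      exact hl l hlS
  split_ifs with hcond
  · obtain ⟨hA, hB⟩ := hcond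
    apply le_antisymm
    · apply iSup_le
      intro x
      have h1 : ⟪u, x⟫ ≤ M x z * ⟪u, z⟫ := hkey hA x
      have h2 : M x z * ⟪u, z⟫ ≤ M x z / M b z := by
        rw [div_eq_mul_inv]
        apply mul_le_mul_of_nonneg_left _ (hMnonneg x)
        rw [inv_eq_one_div, le_div_iff₀ hmpos, mul_comm]
        exact hB
      have : ⟪u, x⟫ - M x z / M b z ≤ 0 := by linarith
      calc ((⟪u, x⟫ - M x z / M b z : ℝ) : EReal) ≤ ((0:ℝ) : EReal) :=
            EReal.coe_le_coe_iff.mpr this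
        _ = 0 := by norm_num
    · have h0 : ((⟪u, (0:EuclideanSpace ℝ (Fin (n + 1)))⟫ - M 0 z / M b z : ℝ) : EReal) = 0 := by
        rw [hM0]
        simp
      calc (0 : EReal) = ((⟪u, (0:EuclideanSpace ℝ (Fin (n + 1)))⟫ - M 0 z / M b z : ℝ) : EReal) := h0.symm
        _ ≤ _ := le_iSup (fun x : EuclideanSpace ℝ (Fin (n + 1)) => ((⟪u, x⟫ - M x z / M b z : ℝ) : EReal)) 0
  · rw [iSup_eq_top]
    intro v hv
    obtain ⟨r, hvr, -⟩ := EReal.lt_iff_exists_real_btwn.mp hv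
    suffices h : ∃ x : EuclideanSpace ℝ (Fin (n + 1)), r < ⟪u, x⟫ - M x z / M b z by
      obtain ⟨x, hx⟩ := h
      exact ⟨x, lt_trans hvr (EReal.coe_lt_coe_iff.mpr hx)⟩
    by_cases hA : ∀ w ∈ C, 0 ≤ ⟪u, w⟫
    · have hB : 1 < M b z * ⟪u, z⟫ := by
        by_contra hB'
        push_neg at hB'
        exact hcond ⟨hA, hB'⟩
      set c := ⟪u, z⟫ - (M b z)⁻¹ with hc
      have hcpos : 0 < c := by
        rw [hc, sub_pos, inv_lt_iff_one_lt_mul₀ hmpos]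
        rwa [mul_comm]
      set t := (|r| + 1) / c with htdef
      have ht : 0 < t := by positivity
      refine ⟨t • z, ?_⟩
      rw [hMtz t ht, inner_smul_right]
      have : t * ⟪u, z⟫ - t / M b z = t * c := by
        rw [hc]; field_simp
      rw [this, htdef, div_mul_cancel₀ _ (ne_of_gt hcpos)]
      calc r ≤ |r| := le_abs_self r
        _ < |r| + 1 := by linarith
    · push_neg at hA
      obtain ⟨w, hw, hwu⟩ := hA
      set c := -⟪u, w⟫ with hc
      have hcpos : 0 < c := by rw [hc]; linarith
      set t := (|r| + 1) / c with htdef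
      have ht : 0 < t := by positivity
      refine ⟨-(t • w), ?_⟩
      rw [hMneg w hw t ht, inner_neg_right, inner_smul_right]
      rw [zero_div, sub_zero]
      have : -(t * ⟪u, w⟫) = t * c := by rw [hc]; ring
      rw [this, htdef, div_mul_cancel₀ _ (ne_of_gt hcpos)]
      calc r ≤ |r| := le_abs_self r
        _ < |r| + 1 := by linarith
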